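/- arXiv:1910.03079 — 9 statements merged into one kernel-verified Lean document; each statement's English description precedes it below -/
import Mathlib

section
/- Let p and q be distinct odd primes. Then the number of natural numbers n which cannot be expressed in the form n = px + qy for non-negative integers x and y is equal to (p-1)(q-1)/2. -/
open Finset

private def SylvRep (p q n : ℕ) : Prop := ∃ x y : ℕ, n = p * x + q * y

private lemma sylv_rep_of_frob_lt {p q : ℕ} (cop : Nat.Coprime p q) (hp : 1 < p) (hq : 1 < q)
    {n : ℕ} (hn : p * q - p - q < n) : SylvRep p q n := by
  have H := frobeniusNumber_pair cop hp hq
  by_contra hrep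
  have hmem : n ∈ {k | k ∉ AddSubmonoid.closure ({p, q} : Set ℕ)} := by
    intro hcl
    rw [AddSubmonoid.mem_closure_pair] at hcl
    obtain ⟨a, b, hab⟩ := hcl
    simp only [smul_eq_mul] at hab
    exact hrep ⟨a, b, by rw [← hab]; ring⟩
  exact absurd (H.2 hmem) (not_le.mpr hn)

private lemma sylv_not_rep_frob {p q : ℕ} (cop : Nat.Coprime p q) (hp : 1 < p) (hq : 1 < q) :
    ¬ SylvRep p q (p * q - p - q) := by
  have H := frobeniusNumber_pair cop hp hq
  rintro ⟨x, y, hxy⟩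
  apply H.1
  rw [AddSubmonoid.mem_closure_pair]
  exact ⟨x, y, by simp only [smul_eq_mul]; rw [hxy]; ring⟩

private lemma sylv_rep_add {p q m n : ℕ} (hm : SylvRep p q m) (hn : SylvRep p q n) :
    SylvRep p q (m + n) := by
  obtain ⟨x1, y1, h1⟩ := hm
  obtain ⟨x2, y2, h2⟩ := hn
  exact ⟨x1 + x2, y1 + y2, by rw [h1, h2]; ring⟩

/-- Symmetry: if `n ≤ F` is not representable, then `F - n` is representable. -/
private lemma sylv_rep_sub_of_not_rep {p q : ℕ} (hp : p.Prime) (hq : q.Prime) (hpq : p ≠ q)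
    {n : ℕ} (hn : n ≤ p * q - p - q) (hnr : ¬ SylvRep p q n) :
    SylvRep p q (p * q - p - q - n) := by
  haveI : Fact q.Prime := ⟨hq⟩
  have hq0 : 0 < q := hq.pos
  have hpz : (p : ZMod q) ≠ 0 := by
    rw [Ne, ZMod.natCast_eq_zero_iff]
    intro hdvd
    exact hpq ((Nat.prime_dvd_prime_iff_eq hq hp).mp hdvd).symm
  set a : ℕ := ((n : ZMod q) * (p : ZMod q)⁻¹).val with ha
  have haq : a < q := ZMod.val_lt _
  have hmod : ((p * a : ℕ) : ZMod q) = ((n : ℕ) : ZMod q) := by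
    push_cast
    rw [ha]
    push_cast [ZMod.natCast_val, ZMod.cast_id]
    field_simp
  have hmodeq : p * a ≡ n [MOD q] := (ZMod.natCast_eq_natCast_iff _ _ _).mp hmod
  -- n < p * a, otherwise n would be representable
  have hlt : n < p * a := by
    by_contra hge
    push_neg at hge
    obtain ⟨b, hb⟩ := (Nat.modEq_iff_dvd' hge).mp hmodeq
    have hb' : n = q * b + p * a := (Nat.sub_eq_iff_eq_add hge).mp hb
    exact hnr ⟨a, b, by rw [hb']; ring⟩
  obtain ⟨c, hc⟩ := (Nat.modEq_iff_dvd' hlt.le).mp hmodeq.symm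
  have hpa : p * a = q * c + n := (Nat.sub_eq_iff_eq_add hlt.le).mp hc
  have hc1 : 1 ≤ c := by
    rcases c with _ | c
    · simp only [Nat.mul_zero, Nat.zero_add] at hpa
      exact absurd hpa.symm hlt.ne
    · omega
  refine ⟨q - 1 - a, c - 1, ?_⟩
  have hx : q - 1 - a + a + 1 = q := by omega
  have e1 : p * (q - 1 - a) + p * a + p = p * q := by
    have h : p * (q - 1 - a + a + 1) = p * q := by rw [hx]
    rw [Nat.mul_add, Nat.mul_add, Nat.mul_one] at h
    exact h
  have e2 : q * (c - 1) + q = q * c := by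
    have h : q * (c - 1 + 1) = q * c := by rw [Nat.sub_add_cancel hc1]
    rw [Nat.mul_add, Nat.mul_one] at h
    exact h
  have e3 : p * q = p * (q - 1 - a) + q * (c - 1) + n + p + q := by linarith
  have hle : p + (q + n) ≤ p * q := by
    linarith [Nat.zero_le (p * (q - 1 - a)), Nat.zero_le (q * (c - 1))]
  rw [Nat.sub_sub, Nat.sub_sub, Nat.sub_eq_iff_eq_add hle]
  linarith

/-- Counting lemma: if `P` holds above `F` and `n ↦ F - n` swaps `P` and `¬ P`
on `[0, F]`, then exactly `(F+1)/2` naturals fail `P`. -/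
private lemma sylv_count (P : ℕ → Prop) (F : ℕ) (h1 : ∀ n, F < n → P n)
    (h2 : ∀ n, n ≤ F → ¬ P n → P (F - n)) (h3 : ∀ n, n ≤ F → P n → ¬ P (F - n)) :
    Nat.card {n : ℕ // ¬ P n} = (F + 1) / 2 := by
  classical
  set N := F + 1 with hN
  set S := (Finset.range N).filter (fun n => ¬ P n) with hS
  set T := (Finset.range N).filter (fun n => P n) with hT
  have hset : {n : ℕ | ¬ P n} = ↑S := by
    ext n
    simp only [Set.mem_setOf_eq, hS, Finset.coe_filter, Finset.mem_range, Set.mem_setOf_eq]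
    constructor
    · intro h
      refine ⟨?_, h⟩
      by_contra hge
      exact h (h1 n (by omega))
    · exact fun h => h.2
  have hcard1 : Nat.card {n : ℕ // ¬ P n} =
      Nat.card {n : ℕ | ¬ P n} := rfl
  rw [hcard1, hset, Nat.card_coe_set_eq, Set.ncard_coe_finset]
  have hbij : S.card = T.card := by
    apply Finset.card_bij (fun n _ => F - n)
    · intro n hn
      simp only [hS, Finset.mem_filter, Finset.mem_range] at hn
      simp only [hT, Finset.mem_filter, Finset.mem_range]
      exact ⟨by omega, h2 n (by omega) hn.2⟩
    · intro n1 hn1 n2 hn2 heq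
      simp only [hS, Finset.mem_filter, Finset.mem_range] at hn1 hn2
      omega
    · intro m hm
      simp only [hT, Finset.mem_filter, Finset.mem_range] at hm
      refine ⟨F - m, ?_, by omega⟩
      simp only [hS, Finset.mem_filter, Finset.mem_range]
      exact ⟨by omega, h3 m (by omega) hm.2⟩
  have hsum : T.card + S.card = N := by
    rw [hT, hS]
    rw [Finset.card_filter_add_card_filter_not (p := fun n => P n)]
    exact Finset.card_range N
  omega

/-- Sylvester (1882): for distinct odd primes `p` and `q`, the number of natural
numbers not expressible as `px + qy` with `x, y` non-negative integers is
`(p-1)(q-1)/2`. -/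
theorem stmt_1 (p q : ℕ) (hp : p.Prime) (hq : q.Prime) (hp2 : Odd p) (hq2 : Odd q)
    (hpq : p ≠ q) :
    Nat.card {n : ℕ // ¬ ∃ x y : ℕ, n = p * x + q * y} = (p - 1) * (q - 1) / 2 := by
  have hp1 : 1 < p := hp.one_lt
  have hq1 : 1 < q := hq.one_lt
  have cop : Nat.Coprime p q := (Nat.coprime_primes hp hq).mpr hpq
  have hmn : p + q ≤ p * q := Nat.add_le_mul hp1 hq1
  have hkey : Nat.card {n : ℕ // ¬ ∃ x y : ℕ, n = p * x + q * y}
      = (p * q - p - q + 1) / 2 := by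
    apply sylv_count (SylvRep p q) (p * q - p - q)
    · exact fun n hn => sylv_rep_of_frob_lt cop hp1 hq1 hn
    · exact fun n hn hnr => sylv_rep_sub_of_not_rep hp hq hpq hn hnr
    · intro n hn hr h2
      apply sylv_not_rep_frob cop hp1 hq1
      have := sylv_rep_add hr h2
      rwa [Nat.add_sub_cancel' hn] at this
  have hval : p * q - p - q + 1 = (p - 1) * (q - 1) := by
    have hpleq : p ≤ p * q := Nat.le_mul_of_pos_right p hq.pos
    have hqle : q ≤ p * q - p := le_tsub_of_add_le_left hmn
    zify [hpleq, hqle, hp1.le, hq1.le]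
    ring
  rw [hkey, hval]
end

section
/- Let a, b, c, n be positive integers with gcd(a,b,c) = 1. Set g1 = gcd(b,c), g2 = gcd(c,a), g3 = gcd(a,b). Let n1, n2, n3 be integers with 0 ≤ n1 < g1, 0 ≤ n2 < g2, 0 ≤ n3 < g3 satisfying a·n1 ≡ n (mod g1), b·n2 ≡ n (mod g2), c·n3 ≡ n (mod g3). Set A = a/(g2·g3), B = b/(g3·g1), C = c/(g1·g2), and N = (n − a·n1 − b·n2 − c·n3)/(g1·g2·g3) as an integer. Then the number of triples (x,y,z) of non-negative integers with ax + by + cz = n equals the number of triples (x,y,z) of non-negative integers with Ax + By + Cz = N. -/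
/-- From the equation `p*x + q*y + r*z = n`, with `g` dividing `q` and `r`,
`p` coprime to `g`, and `p * nx ≡ n [MOD g]` with `nx < g`, we get `nx ≤ x` and
`g ∣ x - nx`. -/
lemma aux_step (p q r x y z n nx g : ℕ)
    (hq : g ∣ q) (hr : g ∣ r)
    (hcop : Nat.Coprime p g) (hcong : p * nx ≡ n [MOD g]) (hnx : nx < g)
    (heq : p * x + q * y + r * z = n) : nx ≤ x ∧ g ∣ x - nx := by
  have h0 : q * y + r * z ≡ 0 + 0 [MOD g] :=
    Nat.ModEq.add ((Nat.modEq_zero_iff_dvd).2 (hq.mul_right y))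
      ((Nat.modEq_zero_iff_dvd).2 (hr.mul_right z))
  have h1 : p * x ≡ p * nx [MOD g] := by
    calc p * x = p * x + 0 + 0 := by ring
    _ ≡ p * x + (q * y + r * z) [MOD g] := by
        simpa [add_assoc] using (Nat.ModEq.add_left (p * x) h0).symm
    _ = n := by omega
    _ ≡ p * nx [MOD g] := hcong.symm
  have h2 : x ≡ nx [MOD g] := Nat.ModEq.cancel_left_of_coprime hcop.symm h1
  have hle : nx ≤ x := by
    have h3 : x % g = nx % g := h2
    have h4 : nx % g = nx := Nat.mod_eq_of_lt hnx
    have h5 : x % g ≤ x := Nat.mod_le x g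
    omega
  exact ⟨hle, (Nat.modEq_iff_dvd' hle).1 h2.symm⟩

/-- Reduction to the pairwise coprime case: the number of non-negative solutions of
`ax + by + cz = n` equals the number of non-negative solutions of `Ax + By + Cz = N`. -/
theorem stmt_2 (a b c n : ℕ) (ha : 0 < a) (hb : 0 < b) (hc : 0 < c) (hn : 0 < n)
    (hgcd : Nat.gcd a (Nat.gcd b c) = 1)
    (n1 n2 n3 : ℕ)
    (hn1 : n1 < Nat.gcd b c) (hn2 : n2 < Nat.gcd c a) (hn3 : n3 < Nat.gcd a b)
    (hcong1 : a * n1 ≡ n [MOD Nat.gcd b c])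
    (hcong2 : b * n2 ≡ n [MOD Nat.gcd c a])
    (hcong3 : c * n3 ≡ n [MOD Nat.gcd a b])
    (A B C : ℕ) (N : ℤ)
    (hA : A = a / (Nat.gcd c a * Nat.gcd a b))
    (hB : B = b / (Nat.gcd a b * Nat.gcd b c))
    (hC : C = c / (Nat.gcd b c * Nat.gcd c a))
    (hN : (Nat.gcd b c * Nat.gcd c a * Nat.gcd a b : ℤ) * N
        = (n : ℤ) - a * n1 - b * n2 - c * n3) :
    Nat.card {t : ℕ × ℕ × ℕ // a * t.1 + b * t.2.1 + c * t.2.2 = n}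
      = Nat.card {t : ℕ × ℕ × ℕ // (A : ℤ) * t.1 + B * t.2.1 + C * t.2.2 = N} := by
  set g1 := Nat.gcd b c with hg1def
  set g2 := Nat.gcd c a with hg2def
  set g3 := Nat.gcd a b with hg3def
  have hg1 : 0 < g1 := Nat.gcd_pos_of_pos_left c hb
  have hg2 : 0 < g2 := Nat.gcd_pos_of_pos_left a hc
  have hg3 : 0 < g3 := Nat.gcd_pos_of_pos_left b ha
  have key : ∀ d : ℕ, d ∣ a → d ∣ b → d ∣ c → d = 1 := fun d hda hdb hdc =>
    Nat.eq_one_of_dvd_one (hgcd ▸ Nat.dvd_gcd hda (Nat.dvd_gcd hdb hdc))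
  have cop_a_g1 : Nat.Coprime a g1 := hgcd
  have cop_b_g2 : Nat.Coprime b g2 :=
    key _ ((Nat.gcd_dvd_right b g2).trans (Nat.gcd_dvd_right c a))
      (Nat.gcd_dvd_left b g2)
      ((Nat.gcd_dvd_right b g2).trans (Nat.gcd_dvd_left c a))
  have cop_c_g3 : Nat.Coprime c g3 :=
    key _ ((Nat.gcd_dvd_right c g3).trans (Nat.gcd_dvd_left a b))
      ((Nat.gcd_dvd_right c g3).trans (Nat.gcd_dvd_right a b))
      (Nat.gcd_dvd_left c g3)
  have cop23 : Nat.Coprime g2 g3 :=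
    key _ ((Nat.gcd_dvd_left g2 g3).trans (Nat.gcd_dvd_right c a))
      ((Nat.gcd_dvd_right g2 g3).trans (Nat.gcd_dvd_right a b))
      ((Nat.gcd_dvd_left g2 g3).trans (Nat.gcd_dvd_left c a))
  have cop31 : Nat.Coprime g3 g1 :=
    key _ ((Nat.gcd_dvd_left g3 g1).trans (Nat.gcd_dvd_left a b))
      ((Nat.gcd_dvd_left g3 g1).trans (Nat.gcd_dvd_right a b))
      ((Nat.gcd_dvd_right g3 g1).trans (Nat.gcd_dvd_right b c))
  have cop12 : Nat.Coprime g1 g2 :=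
    key _ ((Nat.gcd_dvd_right g1 g2).trans (Nat.gcd_dvd_right c a))
      ((Nat.gcd_dvd_left g1 g2).trans (Nat.gcd_dvd_left b c))
      ((Nat.gcd_dvd_left g1 g2).trans (Nat.gcd_dvd_right b c))
  have haA : a = g2 * g3 * A := by
    rw [hA]
    exact (Nat.mul_div_cancel' (Nat.Coprime.mul_dvd_of_dvd_of_dvd cop23
      (Nat.gcd_dvd_right c a) (Nat.gcd_dvd_left a b))).symm
  have hbB : b = g3 * g1 * B := by
    rw [hB]
    exact (Nat.mul_div_cancel' (Nat.Coprime.mul_dvd_of_dvd_of_dvd cop31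
      (Nat.gcd_dvd_right a b) (Nat.gcd_dvd_left b c))).symm
  have hcC : c = g1 * g2 * C := by
    rw [hC]
    exact (Nat.mul_div_cancel' (Nat.Coprime.mul_dvd_of_dvd_of_dvd cop12
      (Nat.gcd_dvd_right b c) (Nat.gcd_dvd_left c a))).symm
  have haZ : (a : ℤ) = (g2 : ℤ) * g3 * A := by exact_mod_cast haA
  have hbZ : (b : ℤ) = (g3 : ℤ) * g1 * B := by exact_mod_cast hbB
  have hcZ : (c : ℤ) = (g1 : ℤ) * g2 * C := by exact_mod_cast hcC
  have hN' : (g1 : ℤ) * g2 * g3 * N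
      = (n : ℤ) - (g2 : ℤ) * g3 * A * n1 - (g3 : ℤ) * g1 * B * n2
        - (g1 : ℤ) * g2 * C * n3 := by
    rw [← haZ, ← hbZ, ← hcZ]; exact hN
  have hgz : ((g1 : ℤ) * g2 * g3) ≠ 0 := by positivity
  -- main forward fact
  have main : ∀ x y z : ℕ, a * x + b * y + c * z = n →
      ((A : ℤ) * ((x - n1) / g1 : ℕ) + (B : ℤ) * ((y - n2) / g2 : ℕ)
         + (C : ℤ) * ((z - n3) / g3 : ℕ) = N)
      ∧ n1 + g1 * ((x - n1) / g1) = x ∧ n2 + g2 * ((y - n2) / g2) = y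
      ∧ n3 + g3 * ((z - n3) / g3) = z := by
    intro x y z heq
    obtain ⟨hle1, hdvd1⟩ := aux_step a b c x y z n n1 g1 (Nat.gcd_dvd_left b c)
      (Nat.gcd_dvd_right b c) cop_a_g1 hcong1 hn1 heq
    obtain ⟨hle2, hdvd2⟩ := aux_step b c a y z x n n2 g2 (Nat.gcd_dvd_left c a)
      (Nat.gcd_dvd_right c a) cop_b_g2 hcong2 hn2 (by rw [← heq]; ring)
    obtain ⟨hle3, hdvd3⟩ := aux_step c a b z x y n n3 g3 (Nat.gcd_dvd_left a b)
      (Nat.gcd_dvd_right a b) cop_c_g3 hcong3 hn3 (by rw [← heq]; ring)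
    have hx : n1 + g1 * ((x - n1) / g1) = x := by
      have := Nat.mul_div_cancel' hdvd1; omega
    have hy : n2 + g2 * ((y - n2) / g2) = y := by
      have := Nat.mul_div_cancel' hdvd2; omega
    have hz : n3 + g3 * ((z - n3) / g3) = z := by
      have := Nat.mul_div_cancel' hdvd3; omega
    refine ⟨?_, hx, hy, hz⟩
    apply mul_left_cancel₀ hgz
    have heqZ : (a : ℤ) * x + b * y + c * z = n := by exact_mod_cast heq
    have hxZ : (x : ℤ) = (n1 : ℤ) + g1 * ((x - n1) / g1 : ℕ) := by exact_mod_cast hx.symm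
    have hyZ : (y : ℤ) = (n2 : ℤ) + g2 * ((y - n2) / g2 : ℕ) := by exact_mod_cast hy.symm
    have hzZ : (z : ℤ) = (n3 : ℤ) + g3 * ((z - n3) / g3 : ℕ) := by exact_mod_cast hz.symm
    rw [haZ, hbZ, hcZ, hxZ, hyZ, hzZ] at heqZ
    linear_combination heqZ - hN'
  have back : ∀ x' y' z' : ℕ, (A : ℤ) * x' + B * y' + C * z' = N →
      a * (n1 + g1 * x') + b * (n2 + g2 * y') + c * (n3 + g3 * z') = n := by
    intro x' y' z' h
    have hZ : ((a * (n1 + g1 * x') + b * (n2 + g2 * y') + c * (n3 + g3 * z') : ℕ) : ℤ)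
        = (n : ℤ) := by
      push_cast
      rw [haZ, hbZ, hcZ]
      linear_combination ((g1 : ℤ) * g2 * g3) * h + hN'
    exact_mod_cast hZ
  exact Nat.card_congr
    { toFun := fun t => ⟨((t.1.1 - n1) / g1, (t.1.2.1 - n2) / g2, (t.1.2.2 - n3) / g3),
        (main _ _ _ t.2).1⟩
      invFun := fun t => ⟨(n1 + g1 * t.1.1, n2 + g2 * t.1.2.1, n3 + g3 * t.1.2.2),
        back _ _ _ t.2⟩
      left_inv := fun t => by
        obtain ⟨h1, h2, h3, h4⟩ := main _ _ _ t.2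
        exact Subtype.ext (Prod.ext h2 (Prod.ext h3 h4))
      right_inv := fun t => by
        apply Subtype.ext
        simp only [Nat.add_sub_cancel_left]
        rw [Nat.mul_div_cancel_left _ hg1, Nat.mul_div_cancel_left _ hg2,
          Nat.mul_div_cancel_left _ hg3] }
end

section
/- Let a, b, c, n be positive integers with gcd(a,b,c) = 1 and let g1 = gcd(b,c), g2 = gcd(c,a), g3 = gcd(a,b). Let n1, n2, n3 be integers with 0 ≤ n1 < g1, 0 ≤ n2 < g2, 0 ≤ n3 < g3 satisfying a·n1 ≡ n (mod g1), b·n2 ≡ n (mod g2), c·n3 ≡ n (mod g3). Then g1·g2·g3 divides n − a·n1 − b·n2 − c·n3. -/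
/-- `g1·g2·g3` divides `n − a·n1 − b·n2 − c·n3`, where `g1 = gcd(b,c)`,
`g2 = gcd(c,a)`, `g3 = gcd(a,b)`. -/
theorem stmt_3 (a b c n : ℕ) (ha : 0 < a) (hb : 0 < b) (hc : 0 < c) (hn : 0 < n)
    (hgcd : Nat.gcd a (Nat.gcd b c) = 1)
    (n1 n2 n3 : ℕ)
    (hn1 : n1 < Nat.gcd b c) (hn2 : n2 < Nat.gcd c a) (hn3 : n3 < Nat.gcd a b)
    (hcong1 : a * n1 ≡ n [MOD Nat.gcd b c])
    (hcong2 : b * n2 ≡ n [MOD Nat.gcd c a])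
    (hcong3 : c * n3 ≡ n [MOD Nat.gcd a b]) :
    (Nat.gcd b c * Nat.gcd c a * Nat.gcd a b : ℤ) ∣
      ((n : ℤ) - a * n1 - b * n2 - c * n3) := by
  set g1 := Nat.gcd b c with hg1
  set g2 := Nat.gcd c a with hg2
  set g3 := Nat.gcd a b with hg3
  -- divisibility facts over ℤ
  have h1b : (g1 : ℤ) ∣ (b : ℤ) := Int.natCast_dvd_natCast.mpr (Nat.gcd_dvd_left b c)
  have h1c : (g1 : ℤ) ∣ (c : ℤ) := Int.natCast_dvd_natCast.mpr (Nat.gcd_dvd_right b c)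
  have h2c : (g2 : ℤ) ∣ (c : ℤ) := Int.natCast_dvd_natCast.mpr (Nat.gcd_dvd_left c a)
  have h2a : (g2 : ℤ) ∣ (a : ℤ) := Int.natCast_dvd_natCast.mpr (Nat.gcd_dvd_right c a)
  have h3a : (g3 : ℤ) ∣ (a : ℤ) := Int.natCast_dvd_natCast.mpr (Nat.gcd_dvd_left a b)
  have h3b : (g3 : ℤ) ∣ (b : ℤ) := Int.natCast_dvd_natCast.mpr (Nat.gcd_dvd_right a b)
  have hc1 : (g1 : ℤ) ∣ ((n : ℤ) - a * n1) := by
    have := Nat.modEq_iff_dvd.mp hcong1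
    push_cast at this ⊢; exact this
  have hc2 : (g2 : ℤ) ∣ ((n : ℤ) - b * n2) := by
    have := Nat.modEq_iff_dvd.mp hcong2
    push_cast at this ⊢; exact this
  have hc3 : (g3 : ℤ) ∣ ((n : ℤ) - c * n3) := by
    have := Nat.modEq_iff_dvd.mp hcong3
    push_cast at this ⊢; exact this
  have d1 : (g1 : ℤ) ∣ ((n : ℤ) - a * n1 - b * n2 - c * n3) :=
    dvd_sub (dvd_sub hc1 (h1b.mul_right _)) (h1c.mul_right _)
  have d2 : (g2 : ℤ) ∣ ((n : ℤ) - a * n1 - b * n2 - c * n3) := by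
    have : ((n : ℤ) - a * n1 - b * n2 - c * n3) =
        ((n : ℤ) - b * n2) - (a : ℤ) * n1 - (c : ℤ) * n3 := by ring
    rw [this]
    exact dvd_sub (dvd_sub hc2 (h2a.mul_right _)) (h2c.mul_right _)
  have d3 : (g3 : ℤ) ∣ ((n : ℤ) - a * n1 - b * n2 - c * n3) := by
    have : ((n : ℤ) - a * n1 - b * n2 - c * n3) =
        ((n : ℤ) - c * n3) - (a : ℤ) * n1 - (b : ℤ) * n2 := by ring
    rw [this]
    exact dvd_sub (dvd_sub hc3 (h3a.mul_right _)) (h3b.mul_right _)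
  -- pairwise coprimality
  have cop12 : Nat.Coprime g1 g2 := by
    have h := Nat.dvd_gcd (Nat.dvd_trans (Nat.gcd_dvd_right g1 g2) (Nat.gcd_dvd_right c a))
      (Nat.dvd_gcd (Nat.dvd_trans (Nat.gcd_dvd_left g1 g2) (Nat.gcd_dvd_left b c))
        (Nat.dvd_trans (Nat.gcd_dvd_left g1 g2) (Nat.gcd_dvd_right b c)))
    exact Nat.eq_one_of_dvd_one (hgcd ▸ h)
  have cop13 : Nat.Coprime g1 g3 := by
    have h := Nat.dvd_gcd (Nat.dvd_trans (Nat.gcd_dvd_right g1 g3) (Nat.gcd_dvd_left a b))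
      (Nat.dvd_gcd (Nat.dvd_trans (Nat.gcd_dvd_left g1 g3) (Nat.gcd_dvd_left b c))
        (Nat.dvd_trans (Nat.gcd_dvd_left g1 g3) (Nat.gcd_dvd_right b c)))
    exact Nat.eq_one_of_dvd_one (hgcd ▸ h)
  have cop23 : Nat.Coprime g2 g3 := by
    have h := Nat.dvd_gcd (Nat.dvd_trans (Nat.gcd_dvd_right g2 g3) (Nat.gcd_dvd_left a b))
      (Nat.dvd_gcd (Nat.dvd_trans (Nat.gcd_dvd_right g2 g3) (Nat.gcd_dvd_right a b))
        (Nat.dvd_trans (Nat.gcd_dvd_left g2 g3) (Nat.gcd_dvd_left c a)))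
    exact Nat.eq_one_of_dvd_one (hgcd ▸ h)
  have i12 : IsCoprime (g1 : ℤ) (g2 : ℤ) := Int.isCoprime_iff_gcd_eq_one.mpr (by
    rw [Int.gcd_natCast_natCast]; exact cop12)
  have i13 : IsCoprime (g1 : ℤ) (g3 : ℤ) := Int.isCoprime_iff_gcd_eq_one.mpr (by
    rw [Int.gcd_natCast_natCast]; exact cop13)
  have i23 : IsCoprime (g2 : ℤ) (g3 : ℤ) := Int.isCoprime_iff_gcd_eq_one.mpr (by
    rw [Int.gcd_natCast_natCast]; exact cop23)
  have h12 : ((g1 : ℤ) * g2) ∣ ((n : ℤ) - a * n1 - b * n2 - c * n3) := i12.mul_dvd d1 d2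
  have i123 : IsCoprime ((g1 : ℤ) * g2) (g3 : ℤ) := IsCoprime.mul_left i13 i23
  exact i123.mul_dvd h12 d3
end

section
/- Let p and q be distinct odd primes. Let N_{p,q} denote the number of triples (x,y,z) of non-negative integers with px + qy + z = q(p−1)/2, and N_{q,p} the number of triples (x,y,z) of non-negative integers with px + qy + z = p(q−1)/2. Then the number of triples (x,y,z) of non-negative integers satisfying px + qy + z = p(q−1)/2 + q(p−1)/2 is equal to 2(N_{p,q} + N_{q,p}) − ((p+1)/2 + (q+1)/2 + 1). -/
open Finset

lemma card_triples (p q N : ℕ) (hp : 0 < p) (hq : 0 < q) :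
    Nat.card {t : ℕ × ℕ × ℕ // p * t.1 + q * t.2.1 + t.2.2 = N}
      = ((range (N+1) ×ˢ range (N+1)).filter fun s => p * s.1 + q * s.2 ≤ N).card := by
  rw [← Nat.card_eq_finsetCard]
  refine Nat.card_congr ⟨fun t => ⟨(t.1.1, t.1.2.1), ?_⟩,
    fun s => ⟨(s.1.1, s.1.2, N - (p * s.1.1 + q * s.1.2)), ?_⟩, ?_, ?_⟩
  · obtain ⟨⟨x, y, z⟩, ht⟩ := t
    dsimp only at ht
    simp only [mem_filter, mem_product, mem_range]
    have hx : x ≤ p * x := Nat.le_mul_of_pos_left x hp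
    have hy : y ≤ q * y := Nat.le_mul_of_pos_left y hq
    omega
  · obtain ⟨⟨x, y⟩, hs⟩ := s
    simp only [mem_filter, mem_product, mem_range] at hs
    simp only []
    omega
  · rintro ⟨⟨x, y, z⟩, ht⟩
    dsimp only at ht
    simp only [Subtype.mk.injEq, Prod.mk.injEq, true_and]
    omega
  · rintro ⟨⟨x, y⟩, hs⟩
    rfl

lemma two_mul_card_total (p q a b : ℕ) (hpa : p = 2*a+1) (hqb : q = 2*b+1)
    (hco : Nat.Coprime p q) :
    2 * (((range (p*b+q*a+1) ×ˢ range (p*b+q*a+1)).filter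
        fun s => p * s.1 + q * s.2 ≤ p*b+q*a).card) = p*q + 1 := by
  set N := p*b+q*a with hN
  have e1 : p*q = 4*(a*b)+2*a+2*b+1 := by rw [hpa, hqb]; ring
  have e2 : p*b = 2*(a*b)+b := by rw [hpa]; ring
  have e3 : q*a = 2*(a*b)+a := by rw [hqb]; ring
  have hNpq : N < p*q := by omega
  have hbox : ((range (N+1) ×ˢ range (N+1)).filter fun s => p * s.1 + q * s.2 ≤ N)
      = ((range q ×ˢ range p).filter fun s => p * s.1 + q * s.2 ≤ N) := by
    ext ⟨x, y⟩
    simp only [mem_filter, mem_product, mem_range]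
    constructor
    · rintro ⟨⟨hx, hy⟩, h⟩
      have hx1 : p*x < p*q := by omega
      have hy1 : q*y < q*p := by rw [mul_comm q p]; omega
      exact ⟨⟨lt_of_mul_lt_mul_left hx1 (Nat.zero_le p),
        lt_of_mul_lt_mul_left hy1 (Nat.zero_le q)⟩, h⟩
    · rintro ⟨⟨hx, hy⟩, h⟩
      have hx1 : x ≤ p*x := Nat.le_mul_of_pos_left x (by omega)
      have hy1 : y ≤ q*y := Nat.le_mul_of_pos_left y (by omega)
      exact ⟨⟨by omega, by omega⟩, h⟩
  rw [hbox]
  set U := range q ×ˢ range p with hU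
  have hcardU : U.card = q * p := by rw [hU, card_product, card_range, card_range]
  have hsplit := Finset.card_filter_add_card_filter_not
    (s := U) (p := fun s => p * s.1 + q * s.2 ≤ N)
  simp only [not_le] at hsplit
  -- split the ≤ filter into < and =
  have hsplit2 := Finset.card_filter_add_card_filter_not
    (s := U.filter fun s => p * s.1 + q * s.2 ≤ N) (p := fun s => p * s.1 + q * s.2 < N)
  simp only [not_lt] at hsplit2
  have hlt : ((U.filter fun s => p * s.1 + q * s.2 ≤ N).filter
        fun s => p * s.1 + q * s.2 < N)
      = (U.filter fun s => p * s.1 + q * s.2 < N) := by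
    rw [filter_filter]
    ext s
    simp only [mem_filter]
    constructor
    · rintro ⟨h1, h2, h3⟩; exact ⟨h1, h3⟩
    · rintro ⟨h1, h3⟩; exact ⟨h1, le_of_lt h3, h3⟩
  have heq : ((U.filter fun s => p * s.1 + q * s.2 ≤ N).filter
        fun s => N ≤ p * s.1 + q * s.2) = {(b, a)} := by
    rw [filter_filter]
    ext ⟨x, y⟩
    simp only [mem_filter, mem_product, mem_range, mem_singleton, Prod.mk.injEq, hU]
    constructor
    · rintro ⟨⟨hx, hy⟩, h1, h2⟩
      have h : p * x + q * y = N := le_antisymm h1 h2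
      -- uniqueness via coprimality
      have hcast : (p:ℤ) * x + q * y = p * b + q * a := by
        have : p * x + q * y = p * b + q * a := by omega
        exact_mod_cast this
      have hdvd : (q:ℤ) ∣ (p:ℤ) * ((x:ℤ) - b) := ⟨(a:ℤ) - y, by linear_combination hcast⟩
      have hic : IsCoprime (q:ℤ) (p:ℤ) := Nat.isCoprime_iff_coprime.mpr hco.symm
      have hq3 : (q:ℤ) ∣ ((x:ℤ) - (b:ℤ)) := hic.dvd_of_dvd_mul_left hdvd
      obtain ⟨k, hk⟩ := hq3
      have hxq : (x:ℤ) < q := by exact_mod_cast hx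
      have hbq : (b:ℤ) < q := by exact_mod_cast (by omega : b < q)
      have hq0 : (0:ℤ) < q := by exact_mod_cast (by omega : 0 < q)
      have hk0 : k = 0 := by
        rcases lt_trichotomy k 0 with h0 | h0 | h0
        · have hle : (q:ℤ) * k ≤ q * (-1) :=
            mul_le_mul_of_nonneg_left (by omega) (le_of_lt hq0)
          rw [mul_neg_one] at hle
          omega
        · exact h0
        · have hle : (q:ℤ) * 1 ≤ q * k :=
            mul_le_mul_of_nonneg_left (by omega) (le_of_lt hq0)
          rw [mul_one] at hle
          omega
      rw [hk0, mul_zero] at hk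
      have hxb' : x = b := by omega
      subst hxb'
      have hya : q * y = q * a := by omega
      have hya' : y = a := Nat.eq_of_mul_eq_mul_left (by omega) hya
      exact ⟨rfl, hya'⟩
    · rintro ⟨rfl, rfl⟩
      exact ⟨⟨by omega, by omega⟩, le_refl _, le_refl _⟩
  -- bijection between < and >
  have hbij : (U.filter fun s => p * s.1 + q * s.2 < N).card
      = (U.filter fun s => N < p * s.1 + q * s.2).card := by
    apply card_nbij' (fun s => (2*b - s.1, 2*a - s.2)) (fun s => (2*b - s.1, 2*a - s.2))
    · rintro ⟨x, y⟩ hs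
      simp only [mem_coe, mem_filter, mem_product, mem_range, hU] at hs ⊢
      obtain ⟨⟨hx, hy⟩, h⟩ := hs
      have w1 : p*(2*b - x) + p*x = p*(2*b) := by rw [← Nat.mul_add]; congr 1; omega
      have w2 : q*(2*a - y) + q*y = q*(2*a) := by rw [← Nat.mul_add]; congr 1; omega
      have w3 : p*(2*b) = 2*(p*b) := by ring
      have w4 : q*(2*a) = 2*(q*a) := by ring
      exact ⟨⟨by omega, by omega⟩, by omega⟩
    · rintro ⟨x, y⟩ hs
      simp only [mem_coe, mem_filter, mem_product, mem_range, hU] at hs ⊢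
      obtain ⟨⟨hx, hy⟩, h⟩ := hs
      have w1 : p*(2*b - x) + p*x = p*(2*b) := by rw [← Nat.mul_add]; congr 1; omega
      have w2 : q*(2*a - y) + q*y = q*(2*a) := by rw [← Nat.mul_add]; congr 1; omega
      have w3 : p*(2*b) = 2*(p*b) := by ring
      have w4 : q*(2*a) = 2*(q*a) := by ring
      exact ⟨⟨by omega, by omega⟩, by omega⟩
    · rintro ⟨x, y⟩ hs
      simp only [mem_coe, mem_filter, mem_product, mem_range, hU] at hs
      obtain ⟨⟨hx, hy⟩, h⟩ := hs
      simp only [Prod.mk.injEq]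
      constructor <;> omega
    · rintro ⟨x, y⟩ hs
      simp only [mem_coe, mem_filter, mem_product, mem_range, hU] at hs
      obtain ⟨⟨hx, hy⟩, h⟩ := hs
      simp only [Prod.mk.injEq]
      constructor <;> omega
  rw [heq, hlt, card_singleton] at hsplit2
  have e4 : q*p = p*q := Nat.mul_comm q p
  omega

lemma card_SA (p q a b : ℕ) (hpa : p = 2*a+1) (hqb : q = 2*b+1) :
    ((range (q*a+1) ×ˢ range (q*a+1)).filter fun s => p * s.1 + q * s.2 ≤ q*a).card
      = ((range (a+1) ×ˢ range (b+1)).filter fun s => p * s.2 ≤ q * s.1).card := by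
  apply card_nbij' (fun s => (a - s.2, s.1)) (fun s => (s.2, a - s.1))
  · rintro ⟨x, y⟩ hs
    dsimp only
    simp only [mem_coe, mem_filter, mem_product, mem_range] at hs ⊢
    obtain ⟨⟨hx, hy⟩, h⟩ := hs
    have hya : y ≤ a := by
      have : q * y ≤ q * a := by omega
      exact Nat.le_of_mul_le_mul_left this (by omega)
    have e2 : q*(a - y) + q*y = q*a := by rw [← Nat.mul_add]; congr 1; omega
    have e5 : q*a + (a+b+1) = p*(b+1) := by rw [hpa, hqb]; ring
    have hxb : x < b + 1 := by
      have h1 : p * x < p * (b+1) := by omega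
      exact lt_of_mul_lt_mul_left h1 (Nat.zero_le p)
    exact ⟨⟨by omega, hxb⟩, by omega⟩
  · rintro ⟨u, v⟩ hs
    dsimp only
    simp only [mem_coe, mem_filter, mem_product, mem_range] at hs ⊢
    obtain ⟨⟨hu, hv⟩, h⟩ := hs
    have e2 : q*(a - u) + q*u = q*a := by rw [← Nat.mul_add]; congr 1; omega
    have hqu : q*u ≤ q*a := Nat.mul_le_mul_left q (by omega)
    have hvv : v ≤ p*v := Nat.le_mul_of_pos_left v (by omega)
    have hau : a ≤ q*a := Nat.le_mul_of_pos_left a (by omega)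
    exact ⟨⟨by omega, by omega⟩, by omega⟩
  · rintro ⟨x, y⟩ hs
    dsimp only
    simp only [mem_coe, mem_filter, mem_product, mem_range] at hs
    obtain ⟨⟨hx, hy⟩, h⟩ := hs
    have hya : y ≤ a := by
      have : q * y ≤ q * a := by omega
      exact Nat.le_of_mul_le_mul_left this (by omega)
    refine Prod.ext ?_ ?_ <;> simp <;> omega
  · rintro ⟨u, v⟩ hs
    dsimp only
    simp only [mem_coe, mem_filter, mem_product, mem_range] at hs
    obtain ⟨⟨hu, hv⟩, h⟩ := hs
    refine Prod.ext ?_ ?_ <;> simp <;> omega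

lemma card_SB (p q a b : ℕ) (hpa : p = 2*a+1) (hqb : q = 2*b+1) :
    ((range (p*b+1) ×ˢ range (p*b+1)).filter fun s => p * s.1 + q * s.2 ≤ p*b).card
      = ((range (a+1) ×ˢ range (b+1)).filter fun s => q * s.1 ≤ p * s.2).card := by
  apply card_nbij' (fun s => (s.2, b - s.1)) (fun s => (b - s.2, s.1))
  · rintro ⟨x, y⟩ hs
    dsimp only
    simp only [mem_coe, mem_filter, mem_product, mem_range] at hs ⊢
    obtain ⟨⟨hx, hy⟩, h⟩ := hs
    have hxb : x ≤ b := by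
      have : p * x ≤ p * b := by omega
      exact Nat.le_of_mul_le_mul_left this (by omega)
    have e2 : p*(b - x) + p*x = p*b := by rw [← Nat.mul_add]; congr 1; omega
    have e5 : p*b + (a+b+1) = q*(a+1) := by rw [hpa, hqb]; ring
    have hya : y < a + 1 := by
      have h1 : q * y < q * (a+1) := by omega
      exact lt_of_mul_lt_mul_left h1 (Nat.zero_le q)
    exact ⟨⟨hya, by omega⟩, by omega⟩
  · rintro ⟨u, v⟩ hs
    dsimp only
    simp only [mem_coe, mem_filter, mem_product, mem_range] at hs ⊢
    obtain ⟨⟨hu, hv⟩, h⟩ := hs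
    have e2 : p*(b - v) + p*v = p*b := by rw [← Nat.mul_add]; congr 1; omega
    have hpv : p*v ≤ p*b := Nat.mul_le_mul_left p (by omega)
    have huu : u ≤ q*u := Nat.le_mul_of_pos_left u (by omega)
    have hbb : b ≤ p*b := Nat.le_mul_of_pos_left b (by omega)
    exact ⟨⟨by omega, by omega⟩, by omega⟩
  · rintro ⟨x, y⟩ hs
    dsimp only
    simp only [mem_coe, mem_filter, mem_product, mem_range] at hs
    obtain ⟨⟨hx, hy⟩, h⟩ := hs
    have hxb : x ≤ b := by
      have : p * x ≤ p * b := by omega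
      exact Nat.le_of_mul_le_mul_left this (by omega)
    refine Prod.ext ?_ ?_ <;> simp <;> omega
  · rintro ⟨u, v⟩ hs
    dsimp only
    simp only [mem_coe, mem_filter, mem_product, mem_range] at hs
    obtain ⟨⟨hu, hv⟩, h⟩ := hs
    refine Prod.ext ?_ ?_ <;> simp <;> omega

lemma card_rect (p q a b : ℕ) (hpa : p = 2*a+1) (hqb : q = 2*b+1)
    (hco : Nat.Coprime p q) :
    ((range (a+1) ×ˢ range (b+1)).filter fun s => p * s.2 ≤ q * s.1).card
      + ((range (a+1) ×ˢ range (b+1)).filter fun s => q * s.1 ≤ p * s.2).card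
      = (a+1) * (b+1) + 1 := by
  have key := Finset.card_union_add_card_inter
    ((range (a+1) ×ˢ range (b+1)).filter fun s => p * s.2 ≤ q * s.1)
    ((range (a+1) ×ˢ range (b+1)).filter fun s => q * s.1 ≤ p * s.2)
  have hun : ((range (a+1) ×ˢ range (b+1)).filter fun s => p * s.2 ≤ q * s.1)
      ∪ ((range (a+1) ×ˢ range (b+1)).filter fun s => q * s.1 ≤ p * s.2)
      = range (a+1) ×ˢ range (b+1) := by
    ext s
    simp only [mem_union, mem_filter]
    constructor
    · rintro (⟨h, -⟩ | ⟨h, -⟩) <;> exact h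
    · intro h
      rcases le_total (p * s.2) (q * s.1) with h1 | h1
      · exact Or.inl ⟨h, h1⟩
      · exact Or.inr ⟨h, h1⟩
  have hin : ((range (a+1) ×ˢ range (b+1)).filter fun s => p * s.2 ≤ q * s.1)
      ∩ ((range (a+1) ×ˢ range (b+1)).filter fun s => q * s.1 ≤ p * s.2)
      = {((0 : ℕ), (0 : ℕ))} := by
    ext ⟨u, v⟩
    simp only [mem_inter, mem_filter, mem_product, mem_range, mem_singleton, Prod.mk.injEq]
    constructor
    · rintro ⟨⟨⟨hu, hv⟩, h1⟩, -, h2⟩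
      have heq : p * v = q * u := le_antisymm h1 h2
      have hdvd : p ∣ u * q := ⟨v, by rw [mul_comm u q, ← heq, mul_comm]⟩
      have hdu : p ∣ u := hco.dvd_of_dvd_mul_right hdvd
      have hu0 : u = 0 := Nat.eq_zero_of_dvd_of_lt hdu (by omega)
      subst hu0
      have hv0 : p * v = 0 := by omega
      have : v = 0 := by
        rcases Nat.mul_eq_zero.mp hv0 with h | h
        · omega
        · exact h
      exact ⟨rfl, this⟩
    · rintro ⟨rfl, rfl⟩
      simp
  rw [hun, hin, card_singleton, card_product, card_range, card_range] at key
  omega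

/-- The number of non-negative integer solutions of
`px + qy + z = p(q−1)/2 + q(p−1)/2` equals
`2(N_{p,q} + N_{q,p}) − ((p+1)/2 + (q+1)/2 + 1)`. -/
theorem stmt_9 (p q : ℕ) (hp : p.Prime) (hq : q.Prime) (hp2 : Odd p) (hq2 : Odd q)
    (hpq : p ≠ q) :
    Nat.card {t : ℕ × ℕ × ℕ //
        p * t.1 + q * t.2.1 + t.2.2 = p * (q - 1) / 2 + q * (p - 1) / 2}
      = 2 * (Nat.card {t : ℕ × ℕ × ℕ // p * t.1 + q * t.2.1 + t.2.2 = q * (p - 1) / 2}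
            + Nat.card {t : ℕ × ℕ × ℕ // p * t.1 + q * t.2.1 + t.2.2 = p * (q - 1) / 2})
        - ((p + 1) / 2 + (q + 1) / 2 + 1) := by
  obtain ⟨a, ha⟩ := hp2
  obtain ⟨b, hb⟩ := hq2
  replace ha : p = 2 * a + 1 := by omega
  replace hb : q = 2 * b + 1 := by omega
  have hp0 : 0 < p := hp.pos
  have hq0 : 0 < q := hq.pos
  have hco : Nat.Coprime p q := (Nat.coprime_primes hp hq).mpr hpq
  have hA : q * (p - 1) / 2 = q * a := by
    have h1 : p - 1 = 2 * a := by omega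
    rw [h1]
    have h2 : q * (2 * a) = 2 * (q * a) := by ring
    rw [h2, Nat.mul_div_cancel_left _ (by norm_num : 0 < 2)]
  have hB : p * (q - 1) / 2 = p * b := by
    have h1 : q - 1 = 2 * b := by omega
    rw [h1]
    have h2 : p * (2 * b) = 2 * (p * b) := by ring
    rw [h2, Nat.mul_div_cancel_left _ (by norm_num : 0 < 2)]
  rw [hA, hB]
  rw [card_triples p q (p * b + q * a) hp0 hq0,
    card_triples p q (q * a) hp0 hq0, card_triples p q (p * b) hp0 hq0]
  have h1 := two_mul_card_total p q a b ha hb hco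
  have h2 := card_SA p q a b ha hb
  have h3 := card_SB p q a b ha hb
  have h4 := card_rect p q a b ha hb hco
  have e1 : p * q = 4 * (a * b) + 2 * a + 2 * b + 1 := by rw [ha, hb]; ring
  have e2 : (a + 1) * (b + 1) = a * b + a + b + 1 := by ring
  omega
end

section
/- Let p and q be distinct odd primes with q < p. Then the number of triples (x,y,z) of non-negative integers satisfying px + qy + z = q(p−1)/2 is equal to (p+1)/2 + (p−1)(q−1)/4 − ∑_{i=1}^{(q−1)/2} ⌊ip/q⌋. -/
/-- The solution set is in bijection with a sigma of `Fin`s. -/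
def solEquiv (p q M : ℕ) (hp : 0 < p) (hq : 0 < q) :
    {t : ℕ × ℕ × ℕ // p * t.1 + q * t.2.1 + t.2.2 = q * M} ≃
      (y : Fin (M + 1)) × Fin (q * (M - (y : ℕ)) / p + 1) where
  toFun t := ⟨⟨t.1.2.1, by
      have h := t.2
      have : q * t.1.2.1 ≤ q * M := by omega
      have := Nat.le_of_mul_le_mul_left this hq
      omega⟩, ⟨t.1.1, by
      simp only [Fin.val_mk]
      have h := t.2
      have h1 : q * t.1.2.1 ≤ q * M := by omega
      have hyM : t.1.2.1 ≤ M := Nat.le_of_mul_le_mul_left h1 hq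
      have hms : q * (M - t.1.2.1) = q * M - q * t.1.2.1 :=
        Nat.mul_sub_left_distrib ..
      have hx : p * t.1.1 ≤ q * (M - t.1.2.1) := by omega
      have : t.1.1 ≤ q * (M - t.1.2.1) / p := by
        rw [Nat.le_div_iff_mul_le hp, mul_comm]; exact hx
      omega⟩⟩
  invFun s := ⟨(s.2, s.1, q * M - p * s.2 - q * s.1), by
      have hx : (s.2 : ℕ) ≤ q * (M - (s.1 : ℕ)) / p := by
        have := s.2.2; omega
      have hx' : p * (s.2 : ℕ) ≤ q * (M - (s.1 : ℕ)) := by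
        rw [mul_comm]
        exact (Nat.le_div_iff_mul_le hp).1 hx
      have hy : (s.1 : ℕ) ≤ M := by have := s.1.2; omega
      have hms : q * (M - (s.1 : ℕ)) = q * M - q * (s.1 : ℕ) :=
        Nat.mul_sub_left_distrib ..
      have hqy : q * (s.1 : ℕ) ≤ q * M := Nat.mul_le_mul_left _ hy
      simp only
      omega⟩
  left_inv t := by
    obtain ⟨⟨x, y, z⟩, h⟩ := t
    simp only at h
    ext <;> simp <;> omega
  right_inv s := by
    obtain ⟨⟨y, hy⟩, ⟨x, hx⟩⟩ := s
    ext <;> simp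

/-- For distinct odd primes `q < p`, the number of non-negative integer solutions of
`px + qy + z = q(p−1)/2` equals `(p+1)/2 + (p−1)(q−1)/4 − ∑_{i=1}^{(q−1)/2} ⌊ip/q⌋`. -/
theorem stmt_11 (p q : ℕ) (hp : p.Prime) (hq : q.Prime) (hp2 : Odd p) (hq2 : Odd q)
    (hqp : q < p) :
    Nat.card {t : ℕ × ℕ × ℕ // p * t.1 + q * t.2.1 + t.2.2 = q * (p - 1) / 2}
      = (p + 1) / 2 + (p - 1) * (q - 1) / 4
        - ∑ i ∈ Finset.Icc 1 ((q - 1) / 2), i * p / q := by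
  obtain ⟨a, ha⟩ := hp2
  obtain ⟨b, hb⟩ := hq2
  have hM : q * (p - 1) / 2 = q * a := by
    subst ha
    rw [show 2 * a + 1 - 1 = 2 * a from rfl, show q * (2 * a) = 2 * (q * a) by ring,
      Nat.mul_div_cancel_left _ (by norm_num)]
  rw [hM]
  have hcard : Nat.card {t : ℕ × ℕ × ℕ // p * t.1 + q * t.2.1 + t.2.2 = q * a}
      = ∑ y ∈ Finset.range (a + 1), (q * (a - y) / p + 1) := by
    rw [Nat.card_congr (solEquiv p q a hp.pos hq.pos), Nat.card_eq_fintype_card,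
      Fintype.card_sigma]
    simp [Fin.sum_univ_eq_sum_range (fun y => q * (a - y) / p + 1)]
  rw [hcard]
  -- reflect the sum
  have hrefl : ∑ y ∈ Finset.range (a + 1), (q * (a - y) / p + 1)
      = (a + 1) + ∑ i ∈ Finset.range (a + 1), i * q / p := by
    rw [Finset.sum_add_distrib, Finset.sum_const, Finset.card_range, smul_eq_mul, mul_one,
      ← Finset.sum_range_reflect (fun i => i * q / p) (a + 1)]
    rw [add_comm]
    congr 1
    refine Finset.sum_congr rfl fun y hy => ?_
    simp only [Finset.mem_range] at hy
    rw [show a + 1 - 1 - y = a - y by omega, mul_comm]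
  rw [hrefl]
  -- Eisenstein reciprocity from Mathlib
  haveI : Fact p.Prime := ⟨hp⟩
  have hq0 : (q : ZMod p) ≠ 0 := by
    rw [Ne, ZMod.natCast_eq_zero_iff]
    intro hdvd
    exact absurd (Nat.le_of_dvd hq.pos hdvd) (by omega)
  have hrec := ZMod.sum_mul_div_add_sum_mul_div_eq_mul p q hq0
  have hp2' : p / 2 = a := by omega
  have hq2' : q / 2 = b := by omega
  rw [hp2', hq2'] at hrec
  have hIr : ∑ i ∈ Finset.range (a + 1), i * q / p = ∑ i ∈ Finset.Ico 1 (a + 1), i * q / p := by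
    rw [Finset.range_eq_Ico, Finset.sum_eq_sum_Ico_succ_bot (Nat.succ_pos a)]
    simp
  have hIcc : ∑ i ∈ Finset.Icc 1 ((q - 1) / 2), i * p / q
      = ∑ i ∈ Finset.Ico 1 (b + 1), i * p / q := by
    rw [show (q - 1) / 2 = b by omega, Finset.Ico_add_one_right_eq_Icc]
  have h4 : (p - 1) * (q - 1) / 4 = a * b := by
    rw [show p - 1 = 2 * a by omega, show q - 1 = 2 * b by omega,
      show 2 * a * (2 * b) = 4 * (a * b) by ring, Nat.mul_div_cancel_left _ (by norm_num)]
  simp only [Nat.succ_eq_add_one] at hrec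
  rw [hIr, hIcc, h4, show (p + 1) / 2 = a + 1 by omega]
  omega
end

section
/- Let a and b be coprime positive integers and n a positive integer. Let a1 be the integer with 0 ≤ a1 < b and a·a1 ≡ n (mod b), and let b1 be the integer with 0 ≤ b1 < a and b·b1 ≡ n (mod a). Then ab divides n − a·a1 − b·b1, and the number of pairs (x,y) of non-negative integers with ax + by = n equals 1 + (n − a·a1 − b·b1)/(ab), as an equality of integers. -/
set_option maxHeartbeats 800000 in
/-- For coprime positive integers `a, b` and positive `n`: `ab ∣ n − a·a1 − b·b1`,
and the number of non-negative solutions of `ax + by = n` is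
`1 + (n − a·a1 − b·b1)/(ab)`. -/
theorem stmt_12 (a b n : ℕ) (ha : 0 < a) (hb : 0 < b) (hn : 0 < n)
    (hab : Nat.gcd a b = 1)
    (a1 b1 : ℕ) (ha1 : a1 < b) (hb1 : b1 < a)
    (hcong1 : a * a1 ≡ n [MOD b]) (hcong2 : b * b1 ≡ n [MOD a]) :
    ((a * b : ℤ) ∣ ((n : ℤ) - a * a1 - b * b1)) ∧
      (Nat.card {t : ℕ × ℕ // a * t.1 + b * t.2 = n} : ℤ)
        = 1 + ((n : ℤ) - a * a1 - b * b1) / (a * b) := by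
  have hA : (a : ℤ) ∣ ((n : ℤ) - a * a1 - b * b1) := by
    have h1 : (a : ℤ) ∣ (n : ℤ) - b * b1 := by
      have := hcong2.dvd
      push_cast at this ⊢
      exact this
    have h2 : (a : ℤ) ∣ (a : ℤ) * a1 := Dvd.intro _ rfl
    have he : ((n : ℤ) - a * a1 - b * b1) = ((n : ℤ) - b * b1) - a * a1 := by ring
    rw [he]
    exact dvd_sub h1 h2
  have hB : (b : ℤ) ∣ ((n : ℤ) - a * a1 - b * b1) := by
    have h1 : (b : ℤ) ∣ (n : ℤ) - a * a1 := by
      have := hcong1.dvd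
      push_cast at this ⊢
      exact this
    exact dvd_sub h1 (Dvd.intro _ rfl)
  have hcop : IsCoprime (a : ℤ) (b : ℤ) := Nat.isCoprime_iff_coprime.mpr hab
  have hdvd : ((a : ℤ) * b) ∣ ((n : ℤ) - a * a1 - b * b1) := hcop.mul_dvd hA hB
  refine ⟨by exact_mod_cast hdvd, ?_⟩
  obtain ⟨c, hc⟩ := hdvd
  have habpos : (0 : ℤ) < (a : ℤ) * b := by positivity
  have hqc : ((n : ℤ) - a * a1 - b * b1) / ((a : ℤ) * b) = c := by
    rw [hc, Int.mul_ediv_cancel_left _ (ne_of_gt habpos)]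
  rw [hqc]
  have hbb : b * b1 + b ≤ a * b := by
    have h1 : b * (b1 + 1) ≤ b * a := Nat.mul_le_mul_left b hb1
    have h2 : b * (b1 + 1) = b * b1 + b := by ring
    have h3 : b * a = a * b := Nat.mul_comm b a
    omega
  have haa : a * a1 + a ≤ a * b := by
    have h1 : a * (a1 + 1) ≤ a * b := Nat.mul_le_mul_left a ha1
    have h2 : a * (a1 + 1) = a * a1 + a := by ring
    omega
  -- card equals card of {k // a*a1 + a*b*k ≤ n}
  have key : Nat.card {t : ℕ × ℕ // a * t.1 + b * t.2 = n}
      = Nat.card {k : ℕ // a * a1 + a * b * k ≤ n} := by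
    refine Nat.card_congr (Equiv.symm (Equiv.ofBijective ?_ ⟨?_, ?_⟩))
    · refine fun k => ⟨(a1 + b * k.1, (n - a * (a1 + b * k.1)) / b), ?_⟩
      obtain ⟨k, hk⟩ := k
      have he1 : a * (a1 + b * k) = a * a1 + a * b * k := by ring
      have hle : a * (a1 + b * k) ≤ n := by omega
      have hd1 : b ∣ n - a * a1 := (Nat.modEq_iff_dvd' (by omega)).mp hcong1
      have hd : b ∣ n - a * (a1 + b * k) := by
        have he2 : n - a * (a1 + b * k) = (n - a * a1) - b * (a * k) := by
          have : b * (a * k) = a * b * k := by ring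
          omega
        rw [he2]
        exact Nat.dvd_sub hd1 (Dvd.intro _ rfl)
      show a * (a1 + b * k) + b * ((n - a * (a1 + b * k)) / b) = n
      rw [Nat.mul_div_cancel' hd]
      exact Nat.add_sub_cancel' hle
    · intro ⟨k1, h1⟩ ⟨k2, h2⟩ h
      have hv := congrArg (fun t => (t : (ℕ × ℕ)).1) (congrArg Subtype.val h)
      simp only at hv
      have : b * k1 = b * k2 := by omega
      have := Nat.eq_of_mul_eq_mul_left hb this
      exact Subtype.ext this
    · rintro ⟨⟨x, y⟩, hxy⟩
      simp only at hxy
      have hax : a * x ≤ n := by omega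
      have hx : x % b = a1 := by
        have h1 : a * x ≡ a * a1 [MOD b] := by
          have h0 : a * x ≡ n [MOD b] :=
            (Nat.modEq_iff_dvd' hax).mpr ⟨y, by omega⟩
          exact h0.trans hcong1.symm
        have h2 : x ≡ a1 [MOD b] :=
          Nat.ModEq.cancel_left_of_coprime (by rwa [Nat.gcd_comm]) h1
        have h3 := h2
        unfold Nat.ModEq at h3
        rw [Nat.mod_eq_of_lt ha1] at h3
        exact h3
      have hmd := Nat.mod_add_div x b
      have hxe : a1 + b * (x / b) = x := by omega
      refine ⟨⟨x / b, ?_⟩, ?_⟩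
      · have he1 : a * (a1 + b * (x / b)) = a * a1 + a * b * (x / b) := by ring
        rw [hxe] at he1
        omega
      · refine Subtype.ext (Prod.ext ?_ ?_)
        · exact hxe
        · show (n - a * (a1 + b * (x / b))) / b = y
          rw [hxe]
          have : n - a * x = b * y := by omega
          rw [this, Nat.mul_div_cancel_left _ hb]
  rw [key]
  by_cases h : a * a1 ≤ n
  · have hc0 : 0 ≤ c := by
      rcases le_or_gt 0 c with h0 | h0
      · exact h0
      · exfalso
        have h1 : c ≤ -1 := by omega
        have h2 : (a : ℤ) * b * c ≤ (a : ℤ) * b * (-1) :=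
          mul_le_mul_of_nonneg_left h1 (le_of_lt habpos)
        have h3 : (a : ℤ) * a1 ≤ n := by exact_mod_cast h
        have h4 : (b : ℤ) * b1 + b ≤ a * b := by exact_mod_cast hbb
        have hbp : (0 : ℤ) < b := by exact_mod_cast hb
        linarith [hc]
    obtain ⟨c', rfl⟩ := Int.eq_ofNat_of_zero_le hc0
    have hM : n = a * b * c' + (a * a1 + b * b1) := by
      have : (n : ℤ) = (a : ℤ) * b * c' + ((a : ℤ) * a1 + (b : ℤ) * b1) := by
        linarith [hc]
      exact_mod_cast this
    have hcard : Nat.card {k : ℕ // a * a1 + a * b * k ≤ n} = c' + 1 := by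
      have he : ∀ k : ℕ, (a * a1 + a * b * k ≤ n) ↔ k < c' + 1 := by
        intro k
        constructor
        · intro hk
          by_contra hcon
          push_neg at hcon
          have h1 : a * b * (c' + 1) ≤ a * b * k :=
            Nat.mul_le_mul_left _ hcon
          have h2 : a * b * (c' + 1) = a * b * c' + a * b := by ring
          omega
        · intro hk
          have h1 : a * b * k ≤ a * b * c' :=
            Nat.mul_le_mul_left _ (by omega)
          omega
      calc Nat.card {k : ℕ // a * a1 + a * b * k ≤ n}
          = Nat.card {k : ℕ // k < c' + 1} :=
            Nat.card_congr (Equiv.subtypeEquivRight he)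
        _ = c' + 1 := by
            rw [Nat.card_congr Fin.equivSubtype.symm, Nat.card_eq_fintype_card,
              Fintype.card_fin]
    rw [hcard]
    push_cast
    ring
  · push_neg at h
    have hempty : IsEmpty {k : ℕ // a * a1 + a * b * k ≤ n} := by
      refine ⟨fun k => ?_⟩
      obtain ⟨k, hk⟩ := k
      have : a * a1 ≤ n := le_trans (Nat.le_add_right _ _) hk
      omega
    rw [Nat.card_of_isEmpty]
    have hcm1 : c = -1 := by
      have hn' : (n : ℤ) < (a : ℤ) * a1 := by exact_mod_cast h
      have h4 : (b : ℤ) * b1 + b ≤ (a : ℤ) * b := by exact_mod_cast hbb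
      have h5 : (a : ℤ) * a1 + a ≤ (a : ℤ) * b := by exact_mod_cast haa
      have hnp : (1 : ℤ) ≤ n := by exact_mod_cast hn
      have hap : (0 : ℤ) < a := by exact_mod_cast ha
      have hbp : (0 : ℤ) < b := by exact_mod_cast hb
      have hub : (a : ℤ) * b * c < 0 := by
        have : (0:ℤ) ≤ (b:ℤ) * b1 := by positivity
        linarith [hc]
      have hlb : -(2 : ℤ) * ((a : ℤ) * b) < (a : ℤ) * b * c := by
        linarith [hc]
      have hc1 : c < 0 := by
        by_contra hcon
        push_neg at hcon
        have := mul_nonneg (le_of_lt habpos) hcon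
        linarith
      have hc2 : -2 < c := by
        by_contra hcon
        push_neg at hcon
        have : (a : ℤ) * b * c ≤ (a : ℤ) * b * (-2) :=
          mul_le_mul_of_nonneg_left hcon (le_of_lt habpos)
        linarith
      omega
    rw [hcm1]
    norm_num
end

section
/- Let a and b be coprime positive integers and n a positive integer with (a−1)(b−1) ≤ n < ab. Then the equation ax + by = n has exactly one solution in non-negative integers (x,y). -/
/-- If `(a−1)(b−1) ≤ n < ab` with `a, b` coprime, then `ax + by = n` has exactly one
solution in non-negative integers. -/
theorem stmt_13 (a b n : ℕ) (ha : 0 < a) (hb : 0 < b) (hn : 0 < n)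
    (hab : Nat.gcd a b = 1) (h1 : (a - 1) * (b - 1) ≤ n) (h2 : n < a * b) :
    ∃! t : ℕ × ℕ, a * t.1 + b * t.2 = n := by
  obtain ⟨a', rfl⟩ : ∃ a', a = a' + 1 := ⟨a - 1, by omega⟩
  obtain ⟨b', rfl⟩ : ∃ b', b = b' + 1 := ⟨b - 1, by omega⟩
  simp only [Nat.add_sub_cancel] at h1
  set a := a' + 1
  set b := b' + 1
  haveI : NeZero b := ⟨hb.ne'⟩
  have hcop : Nat.Coprime a b := hab
  have hunit : IsUnit (a : ZMod b) := (ZMod.isUnit_iff_coprime a b).mpr hcop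
  set u : ZMod b := (a : ZMod b)⁻¹ * (n : ZMod b) with hu
  set x := u.val with hxdef
  have hx_lt : x < b := ZMod.val_lt u
  have hzm : ((a * x : ℕ) : ZMod b) = (n : ZMod b) := by
    rw [Nat.cast_mul, ZMod.natCast_val, ZMod.cast_id, hu, ← mul_assoc,
      ZMod.mul_inv_of_unit _ hunit, one_mul]
  have hmod : a * x ≡ n [MOD b] := (ZMod.natCast_eq_natCast_iff _ _ _).mp hzm
  have hxb : x ≤ b' := by omega
  have hle : a * x ≤ n := by
    by_contra h
    push_neg at h
    have hdvd : b ∣ a * x - n := (Nat.modEq_iff_dvd' h.le).mp hmod.symm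
    have hlt : a * x - n < b := by
      have : a * x ≤ a' * b' + b' := by
        have h4 : a * b' = a' * b' + b' := (by show (a' + 1) * b' = a' * b' + b'; ring)
        nlinarith [Nat.mul_le_mul_left a hxb]
      omega
    have hpos : 0 < a * x - n := by omega
    have := Nat.le_of_dvd hpos hdvd
    omega
  have hdvd : b ∣ n - a * x := (Nat.modEq_iff_dvd' hle).mp hmod
  obtain ⟨y, hy⟩ := hdvd
  refine ⟨⟨x, y⟩, by simp; omega, ?_⟩
  rintro ⟨x2, y2⟩ heq
  simp only at heq
  have hx2b : x2 < b := by nlinarith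
  have hmod2 : a * x2 ≡ n [MOD b] := by
    conv_rhs => rw [← heq]
    simp [Nat.ModEq, Nat.add_mul_mod_self_left]
  have hxx : x2 ≡ x [MOD b] :=
    (hmod2.trans hmod.symm).cancel_left_of_coprime (Nat.coprime_comm.mp hcop)
  have hx2x : x2 = x := by
    have := hxx
    unfold Nat.ModEq at this
    rw [Nat.mod_eq_of_lt hx2b, Nat.mod_eq_of_lt hx_lt] at this
    exact this
  subst hx2x
  have : y2 = y := by
    have : b * y2 = b * y := by omega
    exact Nat.eq_of_mul_eq_mul_left hb this
  simp [this]
end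

section
/- Let p and q be distinct odd primes with p < q, and let M = ⌊(q−p)/(2p)⌋. Then ∑_{i=(q−1)/2 − M}^{(q−1)/2} ⌊ip/q⌋ = ((p−1)/2)·(M + 1). -/
/-- For distinct odd primes `p < q` with `M = ⌊(q−p)/(2p)⌋`:
`∑_{i=(q−1)/2 − M}^{(q−1)/2} ⌊ip/q⌋ = ((p−1)/2)(M+1)`. -/
theorem stmt_15 (p q M : ℕ) (hp : p.Prime) (hq : q.Prime) (hp2 : Odd p) (hq2 : Odd q)
    (hpq : p < q) (hM : M = (q - p) / (2 * p)) :
    ∑ i ∈ Finset.Icc ((q - 1) / 2 - M) ((q - 1) / 2), i * p / q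
      = (p - 1) / 2 * (M + 1) := by
  obtain ⟨a, ha⟩ := hp2
  obtain ⟨k, hk⟩ := hq2
  subst ha hk hM
  have hak : a < k := by omega
  have hM' : (2 * k + 1 - (2 * a + 1)) / (2 * (2 * a + 1)) = (k - a) / (2 * a + 1) := by
    have h1 : 2 * k + 1 - (2 * a + 1) = 2 * (k - a) := by omega
    rw [h1, Nat.mul_div_mul_left _ _ (by norm_num)]
  rw [hM']
  set M := (k - a) / (2 * a + 1) with hMdef
  have hMp : M * (2 * a + 1) ≤ k - a := Nat.div_mul_le_self _ _
  have hMk : M ≤ k := le_trans (le_trans (Nat.le_mul_of_pos_right M (by omega)) hMp) (Nat.sub_le k a)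
  clear_value M
  clear hMdef hM'
  have hs : (2 * k + 1 - 1) / 2 = k := by omega
  have hs2 : (2 * a + 1 - 1) / 2 = a := by omega
  rw [hs, hs2]
  have key : ∀ i ∈ Finset.Icc (k - M) k, i * (2 * a + 1) / (2 * k + 1) = a := by
    intro i hi
    simp only [Finset.mem_Icc] at hi
    apply Nat.div_eq_of_lt_le
    · have h1 : k ≤ i + M := by omega
      have h2 : M * (2 * a + 1) + a ≤ k := by omega
      nlinarith
    · have h1 : i ≤ k := hi.2
      have : i * (2 * a + 1) ≤ k * (2 * a + 1) := Nat.mul_le_mul_right _ h1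
      calc i * (2 * a + 1) ≤ k * (2 * a + 1) := this
        _ < (a + 1) * (2 * k + 1) := by nlinarith
  rw [Finset.sum_congr rfl key, Finset.sum_const, Nat.card_Icc, smul_eq_mul]
  have : k + 1 - (k - M) = M + 1 := by omega
  rw [this, Nat.mul_comm]
end

section
/- Let a, b, c, n be positive integers with gcd(a,b) = gcd(a,c) = 1, and write ζ_a = exp(2πi/a). Let b'1 and c'1 be the integers with 1 ≤ b'1 ≤ a, 1 ≤ c'1 ≤ a, b·b'1 ≡ −n (mod a), and c·c'1 ≡ b (mod a). Then (1/a)·∑_{k=1}^{a−1} (1 − ζ_a^{−nk})/((1 − ζ_a^{bk})(1 − ζ_a^{ck})) = c'1·b'1·(b'1 − 1)/(2a) − ∑_{j=1}^{b'1−1} ⌊j·c'1/a⌋ + 1 − b'1·(a+1)/(2a), as an equality of complex numbers. -/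
open Complex Finset

lemma gauss_Icc (m : ℕ) : (∑ j ∈ Icc 1 m, (j:ℂ)) = m*(m+1)/2 := by
  induction m with
  | zero => simp
  | succ n ih => rw [Finset.sum_Icc_succ_top (by omega)]; push_cast; rw [ih]; ring

lemma sum_mul_geom (x : ℂ) (m : ℕ) :
    (∑ t ∈ range m, (t:ℂ) * x^t) * (x-1) = m * x^m - (∑ t ∈ range m, x^t) + 1 - x^m := by
  induction m with
  | zero => simp
  | succ n ih => rw [sum_range_succ, sum_range_succ, add_mul, ih]; push_cast; ring

lemma range_eq_insert_Icc (a : ℕ) (ha : 0 < a) : range a = insert 0 (Icc 1 (a-1)) := by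
  ext x; simp [Finset.mem_range, Finset.mem_Icc]; omega

lemma sum_zpow_range (a : ℕ) (ζ : ℂ) (hζ : IsPrimitiveRoot ζ a) (m : ℤ) :
    ∑ k ∈ range a, ζ ^ (m * k) = if (a:ℤ) ∣ m then (a:ℂ) else 0 := by
  have hpow : ∀ k : ℕ, ζ ^ (m * (k:ℤ)) = (ζ ^ m) ^ k := by
    intro k; rw [zpow_mul, zpow_natCast]
  simp_rw [hpow]
  by_cases h : (a:ℤ) ∣ m
  · rw [if_pos h]
    have h1 : ζ ^ m = 1 := (hζ.zpow_eq_one_iff_dvd m).2 h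
    simp [h1]
  · rw [if_neg h]
    have h1 : ζ ^ m ≠ 1 := fun hh => h ((hζ.zpow_eq_one_iff_dvd m).1 hh)
    have h2 : (ζ ^ m) ^ a = 1 := by
      rw [← zpow_natCast, ← zpow_mul, mul_comm]
      exact (hζ.zpow_eq_one_iff_dvd _).2 ⟨m, rfl⟩
    rw [geom_sum_eq h1, h2, sub_self, zero_div]

lemma sum_zpow_Icc (a : ℕ) (ha : 0 < a) (ζ : ℂ) (hζ : IsPrimitiveRoot ζ a) (m : ℤ) :
    ∑ k ∈ Icc 1 (a-1), ζ ^ (m * k) = if (a:ℤ) ∣ m then ((a:ℂ)-1) else -1 := by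
  have h := sum_zpow_range a ζ hζ m
  rw [range_eq_insert_Icc a ha, Finset.sum_insert (by simp)] at h
  simp only [Nat.cast_zero, mul_zero, zpow_zero] at h
  by_cases hd : (a:ℤ) ∣ m <;> simp [hd] at h ⊢ <;> linear_combination h

lemma zpow_congr (a : ℕ) (ζ : ℂ) (hζ0 : ζ ≠ 0) (hζ : IsPrimitiveRoot ζ a)
    (s t : ℤ) (h : (a:ℤ) ∣ s - t) : ζ ^ s = ζ ^ t := by
  have : ζ ^ (s - t) = 1 := (hζ.zpow_eq_one_iff_dvd _).2 h
  rw [zpow_sub₀ hζ0] at this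
  exact (div_eq_one_iff_eq (zpow_ne_zero _ hζ0)).1 this

lemma den_sum (a : ℕ) (ha : 0 < a) (y : ℂ) (hy1 : y ≠ 1) (hya : y ^ a = 1) :
    (∑ t ∈ Icc 1 (a-1), (t:ℂ) * y ^ t) * (y - 1) = a := by
  have hg : ∑ t ∈ range a, y ^ t = 0 := by
    rw [geom_sum_eq hy1, hya, sub_self, zero_div]
  have h := sum_mul_geom y a
  rw [hg, hya] at h
  rw [range_eq_insert_Icc a ha, Finset.sum_insert (by simp)] at h
  simpa using h

lemma term_key (a : ℕ) (ha : 0 < a) (ζ : ℂ) (hζ0 : ζ ≠ 0) (hζ : IsPrimitiveRoot ζ a)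
    (B C N : ℤ) (m : ℕ) (hBm : (a:ℤ) ∣ B * m + N)
    (k : ℕ) (hB : ¬ (a:ℤ) ∣ B * k) (hC : ¬ (a:ℤ) ∣ C * k) :
    (1 - ζ ^ (-(N * k))) / ((1 - ζ ^ (B * k)) * (1 - ζ ^ (C * k)))
      = -(1/(a:ℂ)) * ∑ j ∈ range m, ∑ t ∈ Icc 1 (a-1), (t:ℂ) * ζ ^ ((B*j + C*t) * k) := by
  have ha0 : (a:ℂ) ≠ 0 := Nat.cast_ne_zero.2 ha.ne'
  set x := ζ ^ (B * k) with hxdef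
  set y := ζ ^ (C * k) with hydef
  have hx1 : x ≠ 1 := fun hh => hB ((hζ.zpow_eq_one_iff_dvd _).1 hh)
  have hy1 : y ≠ 1 := fun hh => hC ((hζ.zpow_eq_one_iff_dvd _).1 hh)
  have hya : y ^ a = 1 := by
    rw [hydef, ← zpow_natCast, ← zpow_mul]
    exact (hζ.zpow_eq_one_iff_dvd _).2 ⟨C * k, by ring⟩
  have hxj : ∀ j : ℕ, ζ ^ (B * k * j) = x ^ j := by
    intro j; rw [hxdef, ← zpow_natCast, ← zpow_mul]
  have hyt : ∀ t : ℕ, ζ ^ (C * k * t) = y ^ t := by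
    intro t; rw [hydef, ← zpow_natCast, ← zpow_mul]
  obtain ⟨d, hd⟩ := hBm
  have hnum : ζ ^ (-(N * k)) = x ^ m := by
    rw [← hxj m]
    exact zpow_congr a ζ hζ0 hζ _ _ ⟨-(k*d), by linear_combination (-(k:ℤ)) * hd⟩
  have hsplit : ∀ (j t : ℕ), ζ ^ ((B*j + C*t) * k) = x ^ j * y ^ t := by
    intro j t
    rw [← hxj j, ← hyt t, ← zpow_add₀ hζ0]
    congr 1; ring
  have hA : (∑ j ∈ range m, x^j) * (1 - x) = 1 - x^m := by
    linear_combination - geom_sum_mul x m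
  have hD := den_sum a ha y hy1 hya
  rw [hnum]
  simp_rw [hsplit]
  rw [show (∑ j ∈ range m, ∑ t ∈ Icc 1 (a-1), (t:ℂ)*(x^j*y^t))
      = (∑ j ∈ range m, x^j) * (∑ t ∈ Icc 1 (a-1), (t:ℂ)*y^t) by
    rw [Finset.sum_mul_sum]; apply Finset.sum_congr rfl; intro j _
    apply Finset.sum_congr rfl; intro t _; ring]
  have hx0 : (1:ℂ) - x ≠ 0 := sub_ne_zero.2 (Ne.symm hx1)
  have hy0 : (1:ℂ) - y ≠ 0 := sub_ne_zero.2 (Ne.symm hy1)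
  rw [div_eq_iff (mul_ne_zero hx0 hy0)]
  field_simp
  linear_combination (-(a:ℂ)) * hA - (∑ j ∈ range m, x^j)*(1-x) * hD

lemma count_zero (a c : ℕ) (hac : Nat.Coprime a c) (B : ℤ) :
    ∑ t ∈ Icc 1 (a-1), (if (a:ℤ) ∣ (B*(0:ℕ) + c*t) then (t:ℂ) else 0) = 0 := by
  apply Finset.sum_eq_zero
  intro t ht
  simp only [Finset.mem_Icc] at ht
  rw [if_neg]
  push_cast [Nat.cast_zero]
  rw [mul_zero, zero_add]
  intro hdvd
  have hcop : IsCoprime (a:ℤ) (c:ℤ) := by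
    rw [Int.isCoprime_iff_gcd_eq_one, Int.gcd_natCast_natCast]; exact hac
  have : (a:ℤ) ∣ (t:ℤ) := hcop.dvd_of_dvd_mul_left hdvd
  have hpos : (0:ℤ) < t := by exact_mod_cast (by omega : 0 < t)
  have := Int.le_of_dvd hpos this
  omega

lemma count_pos (a b c c'1 : ℕ) (ha1 : 1 < a) (hac : Nat.Coprime a c)
    (e : ℤ) (he : (c:ℤ) * c'1 - b = a * e)
    (j : ℕ) (hmod : j * c'1 % a ≠ 0) :
    ∑ t ∈ Icc 1 (a-1), (if (a:ℤ) ∣ ((b:ℤ)*j + c*t) then (t:ℂ) else 0)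
      = ((a - j * c'1 % a : ℕ) : ℂ) := by
  set r := j * c'1 % a with hr
  have hrlt : r < a := Nat.mod_lt _ (by omega)
  set t0 := a - r with ht0
  have ht0mem : t0 ∈ Icc 1 (a-1) := by simp [Finset.mem_Icc]; omega
  have hq := Nat.div_add_mod (j * c'1) a
  set q := j * c'1 / a with hqdef
  have hdvd0 : (a:ℤ) ∣ ((b:ℤ)*j + c*t0) := by
    refine ⟨(c:ℤ) + c*q - j*e, ?_⟩
    have hqz : (a:ℤ) * q + r = (j:ℤ) * c'1 := by exact_mod_cast hq
    have ht0z : (t0:ℤ) = (a:ℤ) - r := by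
      have : r ≤ a := hrlt.le
      push_cast [ht0, this]; ring
    rw [ht0z]
    linear_combination (-(j:ℤ)) * he - (c:ℤ) * hqz
  rw [Finset.sum_eq_single t0]
  · rw [if_pos hdvd0]
  · intro t ht htne
    rw [if_neg]
    intro hdvd
    have hcop : IsCoprime (a:ℤ) (c:ℤ) := by
      rw [Int.isCoprime_iff_gcd_eq_one, Int.gcd_natCast_natCast]; exact hac
    have hdd : (a:ℤ) ∣ (c:ℤ) * ((t:ℤ) - t0) := by
      have := dvd_sub hdvd hdvd0
      convert this using 1; rfl; ring
    have : (a:ℤ) ∣ ((t:ℤ) - t0) := hcop.dvd_of_dvd_mul_left hdd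
    obtain ⟨u, hu⟩ := this
    simp only [Finset.mem_Icc] at ht ht0mem
    have h1 : 1 ≤ t := ht.1
    have h2 : t ≤ a - 1 := ht.2
    have hb1 : (t:ℤ) - t0 ≤ (a:ℤ) - 2 := by omega
    have hb2 : (2:ℤ) - a ≤ (t:ℤ) - t0 := by omega
    have hu0 : u = 0 := by
      rcases lt_trichotomy u 0 with h|h|h
      · have hh : (a:ℤ) * u ≤ (a:ℤ) * (-1) := mul_le_mul_of_nonneg_left (by omega) (by omega)
        linarith
      · exact h
      · have hh : (a:ℤ) * 1 ≤ (a:ℤ) * u := mul_le_mul_of_nonneg_left (by omega) (by omega)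
        linarith
    rw [hu0, mul_zero, sub_eq_zero] at hu
    exact htne (by exact_mod_cast hu)
  · intro h; exact absurd ht0mem h

/-- Closed form for the root-of-unity sum `S1/a` in terms of floor sums. -/
theorem stmt_18 (a b c n : ℕ) (ha : 0 < a) (hb : 0 < b) (hc : 0 < c) (hn : 0 < n)
    (hab : Nat.gcd a b = 1) (hac : Nat.gcd a c = 1)
    (b'1 c'1 : ℕ)
    (hb'1 : 1 ≤ b'1 ∧ b'1 ≤ a) (hc'1 : 1 ≤ c'1 ∧ c'1 ≤ a)
    (hcong1 : (b : ℤ) * b'1 ≡ -(n : ℤ) [ZMOD (a : ℤ)])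
    (hcong2 : (c : ℤ) * c'1 ≡ (b : ℤ) [ZMOD (a : ℤ)]) :
    (1 / (a : ℂ)) * ∑ k ∈ Finset.Icc 1 (a - 1),
        (1 - Complex.exp (2 * Real.pi * Complex.I / a) ^ (-((n : ℤ) * k))) /
          ((1 - Complex.exp (2 * Real.pi * Complex.I / a) ^ ((b : ℤ) * k)) *
           (1 - Complex.exp (2 * Real.pi * Complex.I / a) ^ ((c : ℤ) * k)))
      = (c'1 : ℂ) * b'1 * ((b'1 : ℂ) - 1) / (2 * a)
        - ∑ j ∈ Finset.Icc 1 (b'1 - 1), ((j * c'1 / a : ℕ) : ℂ)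
        + 1 - (b'1 : ℂ) * ((a : ℂ) + 1) / (2 * a) := by
  by_cases ha1 : a = 1
  · subst ha1
    have hb'e : b'1 = 1 := le_antisymm hb'1.2 hb'1.1
    have hc'e : c'1 = 1 := le_antisymm hc'1.2 hc'1.1
    subst hb'e; subst hc'e
    rw [show (1:ℕ)-1 = 0 from rfl, Finset.Icc_eq_empty (by omega)]
    simp
  · have ha2 : 1 < a := by omega
    obtain ⟨hb'l, hb'r⟩ := hb'1
    set ζ : ℂ := Complex.exp (2 * Real.pi * Complex.I / a) with hζdef
    have hζ : IsPrimitiveRoot ζ a := Complex.isPrimitiveRoot_exp a (by omega)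
    have hζ0 : ζ ≠ 0 := Complex.exp_ne_zero _
    have ha0 : (a:ℂ) ≠ 0 := Nat.cast_ne_zero.2 (by omega)
    have hBm : (a:ℤ) ∣ (b:ℤ) * b'1 + n := by
      obtain ⟨d, hd⟩ := Int.ModEq.dvd hcong1
      exact ⟨-d, by linarith⟩
    obtain ⟨e0, he0⟩ := Int.ModEq.dvd hcong2
    have he : (c:ℤ)*c'1 - b = a * (-e0) := by push_cast at he0 ⊢; linarith
    have hcopb : IsCoprime (a:ℤ) (b:ℤ) := by
      rw [Int.isCoprime_iff_gcd_eq_one, Int.gcd_natCast_natCast]; exact hab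
    have hcopc : IsCoprime (a:ℤ) (c:ℤ) := by
      rw [Int.isCoprime_iff_gcd_eq_one, Int.gcd_natCast_natCast]; exact hac
    have hcopc'1 : Nat.Coprime a c'1 := by
      have h1 : ((Nat.gcd a c'1 : ℕ):ℤ) ∣ (a:ℤ) := Int.natCast_dvd_natCast.2 (Nat.gcd_dvd_left _ _)
      have h2 : ((Nat.gcd a c'1 : ℕ):ℤ) ∣ (c'1:ℤ) := Int.natCast_dvd_natCast.2 (Nat.gcd_dvd_right _ _)
      have hg1 : ((Nat.gcd a c'1 : ℕ):ℤ) ∣ (b:ℤ) := by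
        have hbv : (b:ℤ) = (c:ℤ) * c'1 - a*(-e0) := by linarith
        rw [hbv]
        exact dvd_sub (h2.mul_left _) (h1.mul_right _)
      have hgb : Nat.gcd a c'1 ∣ b := Int.natCast_dvd_natCast.1 hg1
      have hdg := Nat.dvd_gcd (Nat.gcd_dvd_left a c'1) hgb
      rw [hab] at hdg
      exact Nat.dvd_one.1 hdg
    have hmodj : ∀ j ∈ Finset.Icc 1 (b'1 - 1), j * c'1 % a ≠ 0 := by
      intro j hj hz
      simp only [Finset.mem_Icc] at hj
      have hd : a ∣ j * c'1 := Nat.dvd_of_mod_eq_zero hz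
      have hdj : a ∣ j := Nat.Coprime.dvd_of_dvd_mul_right hcopc'1 hd
      have := Nat.le_of_dvd (by omega) hdj
      omega
    have hkB : ∀ k ∈ Finset.Icc 1 (a-1), ¬ (a:ℤ) ∣ (b:ℤ) * k := by
      intro k hk hdvd
      simp only [Finset.mem_Icc] at hk
      have hdk : (a:ℤ) ∣ (k:ℤ) := hcopb.dvd_of_dvd_mul_left hdvd
      have hkpos : (0:ℤ) < k := by exact_mod_cast (by omega : 0 < k)
      have := Int.le_of_dvd hkpos hdk
      omega
    have hkC : ∀ k ∈ Finset.Icc 1 (a-1), ¬ (a:ℤ) ∣ (c:ℤ) * k := by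
      intro k hk hdvd
      simp only [Finset.mem_Icc] at hk
      have hdk : (a:ℤ) ∣ (k:ℤ) := hcopc.dvd_of_dvd_mul_left hdvd
      have hkpos : (0:ℤ) < k := by exact_mod_cast (by omega : 0 < k)
      have := Int.le_of_dvd hkpos hdk
      omega
    rw [Finset.sum_congr rfl (fun k hk =>
      term_key a ha ζ hζ0 hζ b c n b'1 hBm k (hkB k hk) (hkC k hk))]
    rw [← Finset.mul_sum]
    have hT : ∑ t ∈ Finset.Icc 1 (a-1), (t:ℂ) = ((a:ℂ)-1)*a/2 := by
      rw [gauss_Icc, Nat.cast_sub ha]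
      push_cast; ring
    have hswap : (∑ k ∈ Finset.Icc 1 (a-1), ∑ j ∈ Finset.range b'1,
          ∑ t ∈ Finset.Icc 1 (a-1), (t:ℂ) * ζ^(((b:ℤ)*j + (c:ℤ)*t)*k))
        = ∑ j ∈ Finset.range b'1, ∑ t ∈ Finset.Icc 1 (a-1),
            ((a:ℂ) * (if (a:ℤ) ∣ ((b:ℤ)*j+(c:ℤ)*t) then (t:ℂ) else 0) - t) := by
      rw [Finset.sum_comm]
      refine Finset.sum_congr rfl fun j _ => ?_
      rw [Finset.sum_comm]
      refine Finset.sum_congr rfl fun t _ => ?_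
      rw [← Finset.mul_sum, sum_zpow_Icc a ha ζ hζ]
      by_cases hd : (a:ℤ) ∣ ((b:ℤ)*j + (c:ℤ)*t) <;> simp [hd] <;> ring
    rw [hswap]
    rw [range_eq_insert_Icc b'1 (by omega), Finset.sum_insert (by simp)]
    have h0 : ∑ t ∈ Finset.Icc 1 (a-1),
          ((a:ℂ) * (if (a:ℤ) ∣ ((b:ℤ)*(0:ℕ)+(c:ℤ)*t) then (t:ℂ) else 0) - t)
        = -(((a:ℂ)-1)*a/2) := by
      rw [Finset.sum_sub_distrib, ← Finset.mul_sum, count_zero a c hac, hT, mul_zero, zero_sub]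
    have hjpos : ∀ j ∈ Finset.Icc 1 (b'1-1), (∑ t ∈ Finset.Icc 1 (a-1),
          ((a:ℂ) * (if (a:ℤ) ∣ ((b:ℤ)*j+(c:ℤ)*t) then (t:ℂ) else 0) - t))
        = (a:ℂ) * ((a - j*c'1 % a : ℕ):ℂ) - (((a:ℂ)-1)*a/2) := by
      intro j hj
      rw [Finset.sum_sub_distrib, ← Finset.mul_sum,
        count_pos a b c c'1 ha2 hac (-e0) he j (hmodj j hj), hT]
    rw [h0, Finset.sum_congr rfl hjpos]
    have hbig : ∑ j ∈ Finset.Icc 1 (b'1-1), ((a:ℂ) * ((a - j*c'1 % a : ℕ):ℂ) - (((a:ℂ)-1)*a/2))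
        = (a:ℂ) * (((b'1:ℂ)-1) * a - (c'1:ℂ)*(((b'1:ℂ)-1)*b'1/2)
            + (a:ℂ) * ∑ j ∈ Finset.Icc 1 (b'1-1), ((j*c'1/a : ℕ):ℂ))
          - ((b'1:ℂ)-1) * (((a:ℂ)-1)*a/2) := by
      rw [Finset.sum_sub_distrib, ← Finset.mul_sum, Finset.sum_const, Nat.card_Icc,
        nsmul_eq_mul]
      have hMsum : ∑ j ∈ Finset.Icc 1 (b'1-1), ((a - j*c'1 % a : ℕ):ℂ)
          = ∑ j ∈ Finset.Icc 1 (b'1-1),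
              ((a:ℂ) - (c'1:ℂ)*(j:ℂ) + (a:ℂ) * ((j*c'1/a : ℕ):ℂ)) := by
        refine Finset.sum_congr rfl fun j hj => ?_
        have hrlt : j * c'1 % a < a := Nat.mod_lt _ (by omega)
        have hq := Nat.div_add_mod (j*c'1) a
        have hqC : (a:ℂ) * ((j*c'1/a:ℕ):ℂ) + ((j*c'1%a:ℕ):ℂ) = (j:ℂ) * (c'1:ℂ) := by
          exact_mod_cast congrArg (Nat.cast : ℕ → ℂ) hq
        rw [Nat.cast_sub hrlt.le]
        linear_combination -hqC
      rw [hMsum, Finset.sum_add_distrib, Finset.sum_sub_distrib, Finset.sum_const,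
        Nat.card_Icc, nsmul_eq_mul, ← Finset.mul_sum, ← Finset.mul_sum, gauss_Icc]
      push_cast [Nat.cast_sub hb'l]
      ring
    rw [hbig]
    push_cast [Nat.cast_sub hb'l]
    field_simp
    ring
end
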